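/- Consider the FPL algorithm with learning rate ε_{t-1} = 1/(μ·max{s¹_{1:t-1}, s²_{1:t-1}}) and the IFPL algorithm with learning rate ε_t = 1/(μ·max{s¹_{1:t}, s²_{1:t}}), both using the same i.i.d. exponential perturbations ξ¹_t, ξ²_t, in a two-expert game with nonnegative gains. Then for every t and every pair of experts, the probabilities of choosing expert i under FPL and IFPL satisfy e^{2/μ}·P{J=i} ≥ P{I=i} ≥ e^{−2/μ}·P{J=i} for i = 1,2, and consequently the expected one-step gains satisfy l_t ≥ e^{−2/μ}·r_t. -/

import Mathlib

open MeasureTheory ProbabilityTheory Filter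

/-- Cumulative gain `sⁱ_{1:t}`, including the initial gain `sⁱ_0` (taken to be `1`). -/
noncomputable def cum (s : ℕ → ℝ) (t : ℕ) : ℝ := ∑ j ∈ Finset.range (t + 1), s j

/-- `v_t = max {s¹_{1:t}, s²_{1:t}}`. -/
noncomputable def vmax (s1 s2 : ℕ → ℝ) (t : ℕ) : ℝ := max (cum s1 t) (cum s2 t)

/-- The event that the perturbed leader, with cumulative gains evaluated at time `u` and
learning rate `ε_u = 1/(μ v_u)` (so the perturbation is `ξ/ε_u = μ v_u ξ`), selects
expert 1 at step `t`. For FPL take `u = t - 1`, for IFPL take `u = t`. -/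
def pick1 {Ω : Type*} (ξ : ℕ × Bool → Ω → ℝ) (μ : ℝ) (s1 s2 : ℕ → ℝ) (t u : ℕ) : Set Ω :=
  {ω | cum s1 u + μ * vmax s1 s2 u * ξ (t, true) ω >
       cum s2 u + μ * vmax s1 s2 u * ξ (t, false) ω}

/-- Expected one-step gain `l_t` of the FPL algorithm (learning rate `1/(μ v_{t-1})`). -/
noncomputable def fplGain {Ω : Type*} [MeasurableSpace Ω] (Pr : Measure Ω)
    (ξ : ℕ × Bool → Ω → ℝ) (μ : ℝ) (s1 s2 : ℕ → ℝ) (t : ℕ) : ℝ :=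
  s1 t * (Pr (pick1 ξ μ s1 s2 t (t - 1))).toReal +
  s2 t * (Pr (pick1 ξ μ s1 s2 t (t - 1))ᶜ).toReal

/-- Expected one-step gain `r_t` of the IFPL algorithm (learning rate `1/(μ v_t)`). -/
noncomputable def ifplGain {Ω : Type*} [MeasurableSpace Ω] (Pr : Measure Ω)
    (ξ : ℕ × Bool → Ω → ℝ) (μ : ℝ) (s1 s2 : ℕ → ℝ) (t : ℕ) : ℝ :=
  s1 t * (Pr (pick1 ξ μ s1 s2 t t)).toReal +
  s2 t * (Pr (pick1 ξ μ s1 s2 t t)ᶜ).toReal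

/- ### Auxiliary lemmas -/

/-- Exponential tail function `min 1 e^{-b}`. -/
noncomputable def tailf (b : ℝ) : ENNReal := ENNReal.ofReal (Real.exp (-(max b 0)))

lemma tailf_comp {b b' δ : ℝ} (hδ : 0 ≤ δ) (h : b' ≤ b + δ) :
    ENNReal.ofReal (Real.exp (-δ)) * tailf b ≤ tailf b' := by
  unfold tailf
  rw [← ENNReal.ofReal_mul (Real.exp_pos _).le, ← Real.exp_add]
  apply ENNReal.ofReal_le_ofReal
  apply Real.exp_le_exp.mpr
  have : max b' 0 ≤ δ + max b 0 := by
    rcases le_total b' 0 with h'|h'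
    · simp [max_eq_right h']; positivity
    · rw [max_eq_left h']
      calc b' ≤ b + δ := h
        _ ≤ max b 0 + δ := by gcongr; exact le_max_left _ _
        _ = δ + max b 0 := by ring
  linarith

section Tails
variable {Ω : Type*} [MeasurableSpace Ω] (Pr : Measure Ω) [IsProbabilityMeasure Pr]

lemma tail_Ioi {X : Ω → ℝ} (hX : Measurable X)
    (ht : ∀ y : ℝ, 0 ≤ y → Pr {ω | X ω > y} = ENNReal.ofReal (Real.exp (-y))) :
    ∀ x : ℝ, Pr.map X (Set.Ioi x) = tailf x := by
  intro x
  rw [Measure.map_apply hX measurableSet_Ioi]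
  have hpre : ∀ z : ℝ, X ⁻¹' Set.Ioi z = {ω | X ω > z} := fun z => rfl
  rcases le_total 0 x with hx|hx
  · rw [hpre, ht x hx]; unfold tailf; rw [max_eq_left hx]
  · have h1 : Pr (X ⁻¹' Set.Ioi x) = 1 := by
      have hub : Pr (X ⁻¹' Set.Ioi (0:ℝ)) ≤ Pr (X ⁻¹' Set.Ioi x) :=
        measure_mono (Set.preimage_mono (Set.Ioi_subset_Ioi hx))
      rw [hpre, ht 0 le_rfl] at hub
      simp only [neg_zero, Real.exp_zero, ENNReal.ofReal_one] at hub
      exact le_antisymm prob_le_one hub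
    rw [h1]; unfold tailf; rw [max_eq_right hx]; simp

lemma tail_Ici {X : Ω → ℝ} (hX : Measurable X)
    (ht : ∀ y : ℝ, 0 ≤ y → Pr {ω | X ω > y} = ENNReal.ofReal (Real.exp (-y))) :
    ∀ x : ℝ, Pr.map X (Set.Ici x) = tailf x := by
  intro x
  have hIoi := tail_Ioi Pr hX ht
  have hset : Set.Ici x = ⋂ n : ℕ, Set.Ioi (x - 1/(n+1)) := by
    ext z
    simp only [Set.mem_Ici, Set.mem_iInter, Set.mem_Ioi]
    constructor
    · intro hz n
      have : (0:ℝ) < 1/(n+1) := by positivity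
      linarith
    · intro hz
      by_contra hc
      push_neg at hc
      obtain ⟨n, hn⟩ := exists_nat_one_div_lt (show (0:ℝ) < x - z by linarith)
      have := hz n
      linarith
  have hanti : Antitone (fun n : ℕ => Set.Ioi (x - 1/(n+1))) := by
    intro m n hmn
    apply Set.Ioi_subset_Ioi
    have : (1:ℝ)/(n+1) ≤ 1/(m+1) := by
      apply one_div_le_one_div_of_le (by positivity)
      exact_mod_cast by omega
    linarith
  have htend := tendsto_measure_iInter_atTop (μ := Pr.map X)
    (s := fun n : ℕ => Set.Ioi (x - 1/((n:ℝ)+1)))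
    (fun n => (measurableSet_Ioi (a := x - 1/(n+1))).nullMeasurableSet) hanti
    ⟨0, measure_ne_top _ _⟩
  rw [← hset] at htend
  have htend2 : Tendsto (fun n : ℕ => (Pr.map X) (Set.Ioi (x - 1/(n+1)))) atTop
      (nhds (tailf x)) := by
    simp only [hIoi]
    have harg : Tendsto (fun n : ℕ => x - 1/((n:ℝ)+1)) atTop (nhds x) := by
      have : Tendsto (fun n : ℕ => 1/((n:ℝ)+1)) atTop (nhds 0) :=
        tendsto_one_div_add_atTop_nhds_zero_nat
      simpa using tendsto_const_nhds.sub this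
    have hcont : Continuous fun b : ℝ => tailf b := by
      unfold tailf
      exact ENNReal.continuous_ofReal.comp ((Real.continuous_exp.comp continuous_neg).comp
        (continuous_id.max continuous_const))
    exact (hcont.tendsto x).comp harg
  exact tendsto_nhds_unique htend htend2

lemma prob_gt {X Y : Ω → ℝ} (hX : Measurable X) (hY : Measurable Y)
    (hind : IndepFun X Y Pr)
    (hIoi : ∀ x : ℝ, Pr.map X (Set.Ioi x) = tailf x) (c : ℝ) :
    Pr {ω | X ω > c + Y ω} = ∫⁻ y, tailf (c + y) ∂(Pr.map Y) := by
  haveI : IsProbabilityMeasure (Pr.map X) := Measure.isProbabilityMeasure_map hX.aemeasurable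
  haveI : IsProbabilityMeasure (Pr.map Y) := Measure.isProbabilityMeasure_map hY.aemeasurable
  have hmap : Pr.map (fun ω => (X ω, Y ω)) = (Pr.map X).prod (Pr.map Y) :=
    (indepFun_iff_map_prod_eq_prod_map_map hX.aemeasurable hY.aemeasurable).mp hind
  have hs : MeasurableSet {p : ℝ × ℝ | p.1 > c + p.2} := by
    apply measurableSet_lt
    · exact measurable_const.add measurable_snd
    · exact measurable_fst
  have h1 : Pr {ω | X ω > c + Y ω}
      = Pr.map (fun ω => (X ω, Y ω)) {p : ℝ × ℝ | p.1 > c + p.2} := by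
    rw [Measure.map_apply (hX.prodMk hY) hs]; rfl
  rw [h1, hmap, Measure.prod_apply_symm hs]
  congr 1
  ext y
  have : (fun x => (x, y)) ⁻¹' {p : ℝ × ℝ | p.1 > c + p.2} = Set.Ioi (c + y) := by
    ext x; simp [Set.mem_Ioi]
  rw [this, hIoi]

lemma prob_ge {X Y : Ω → ℝ} (hX : Measurable X) (hY : Measurable Y)
    (hind : IndepFun X Y Pr)
    (hIci : ∀ x : ℝ, Pr.map Y (Set.Ici x) = tailf x) (c : ℝ) :
    Pr {ω | Y ω ≥ X ω - c} = ∫⁻ x, tailf (x - c) ∂(Pr.map X) := by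
  haveI : IsProbabilityMeasure (Pr.map X) := Measure.isProbabilityMeasure_map hX.aemeasurable
  haveI : IsProbabilityMeasure (Pr.map Y) := Measure.isProbabilityMeasure_map hY.aemeasurable
  have hmap : Pr.map (fun ω => (Y ω, X ω)) = (Pr.map Y).prod (Pr.map X) :=
    (indepFun_iff_map_prod_eq_prod_map_map hY.aemeasurable hX.aemeasurable).mp hind.symm
  have hs : MeasurableSet {p : ℝ × ℝ | p.1 ≥ p.2 - c} := by
    apply measurableSet_le
    · exact measurable_snd.sub measurable_const
    · exact measurable_fst
  have h1 : Pr {ω | Y ω ≥ X ω - c}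
      = Pr.map (fun ω => (Y ω, X ω)) {p : ℝ × ℝ | p.1 ≥ p.2 - c} := by
    rw [Measure.map_apply (hY.prodMk hX) hs]; rfl
  rw [h1, hmap, Measure.prod_apply_symm hs]
  congr 1
  ext x
  have : (fun y => (y, x)) ⁻¹' {p : ℝ × ℝ | p.1 ≥ p.2 - c} = Set.Ici (x - c) := by
    ext y; simp [Set.mem_Ici]
  rw [this, hIci]

end Tails

lemma lint_comp (ν : Measure ℝ) {g g' : ℝ → ℝ} {δ : ℝ} (hδ : 0 ≤ δ)
    (h : ∀ x, g' x ≤ g x + δ) :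
    ENNReal.ofReal (Real.exp (-δ)) * ∫⁻ x, tailf (g x) ∂ν ≤ ∫⁻ x, tailf (g' x) ∂ν := by
  rw [← MeasureTheory.lintegral_const_mul' _ _ ENNReal.ofReal_ne_top]
  exact lintegral_mono fun x => tailf_comp hδ (h x)

lemma ennreal_flip {a b : ENNReal} {δ : ℝ} (h : ENNReal.ofReal (Real.exp (-δ)) * a ≤ b) :
    a ≤ ENNReal.ofReal (Real.exp δ) * b := by
  calc a = (ENNReal.ofReal (Real.exp δ) * ENNReal.ofReal (Real.exp (-δ))) * a := by
        rw [← ENNReal.ofReal_mul (Real.exp_pos _).le, ← Real.exp_add]; simp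
    _ = ENNReal.ofReal (Real.exp δ) * (ENNReal.ofReal (Real.exp (-δ)) * a) := by rw [mul_assoc]
    _ ≤ ENNReal.ofReal (Real.exp δ) * b := mul_le_mul_right h _

lemma diff_bound {A1 A2 g1 g2 : ℝ} (hA1 : 1 ≤ A1) (hA2 : 1 ≤ A2)
    (hg1 : 0 ≤ g1) (hg2 : 0 ≤ g2) (hz : g1 = 0 ∨ g2 = 0) :
    |(A2 + g2 - (A1 + g1)) / max (A1 + g1) (A2 + g2) - (A2 - A1) / max A1 A2| ≤ 2 := by
  set v : ℝ := max A1 A2 with hv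
  set v' : ℝ := max (A1 + g1) (A2 + g2) with hv'
  have hv1 : 1 ≤ v := le_trans hA1 (le_max_left _ _)
  have hvpos : (0:ℝ) < v := by linarith
  have hv'v : v ≤ v' := max_le_max (by linarith) (by linarith)
  have hv'pos : (0:ℝ) < v' := lt_of_lt_of_le hvpos hv'v
  have hv'le : v' ≤ v + g1 + g2 := by
    apply max_le
    · have := le_max_left A1 A2; linarith
    · have := le_max_right A1 A2; linarith
  have hDle : A2 - A1 ≤ v - 1 := by have := le_max_right A1 A2; linarith
  have hDge : -(v - 1) ≤ A2 - A1 := by have := le_max_left A1 A2; linarith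
  have hg1v : g1 ≤ v' := by have := le_max_left (A1 + g1) (A2 + g2); linarith
  have hg2v : g2 ≤ v' := by have := le_max_right (A1 + g1) (A2 + g2); linarith
  have key : |(A2 + g2 - (A1 + g1)) * v - (A2 - A1) * v'| ≤ 2 * (v * v') := by
    rcases hz with h | h
    · subst h
      rw [abs_le]
      constructor
      · nlinarith [mul_nonneg (sub_nonneg.mpr hv'v) (sub_nonneg.mpr (by linarith : A2 - A1 ≤ v)),
          mul_nonneg hg2 (by linarith : (0:ℝ) ≤ v), mul_nonneg (sub_nonneg.mpr hg2v) hvpos.le]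
      · nlinarith [mul_nonneg (sub_nonneg.mpr hv'v) (by linarith : (0:ℝ) ≤ v + (A2 - A1)),
          mul_nonneg hg2 (by linarith : (0:ℝ) ≤ v), mul_nonneg (sub_nonneg.mpr hg2v) hvpos.le]
    · subst h
      rw [abs_le]
      constructor
      · nlinarith [mul_nonneg (sub_nonneg.mpr hv'v) (by linarith : (0:ℝ) ≤ v + (A2 - A1)),
          mul_nonneg hg1 (by linarith : (0:ℝ) ≤ v), mul_nonneg (sub_nonneg.mpr hg1v) hvpos.le]
      · nlinarith [mul_nonneg (sub_nonneg.mpr hv'v) (sub_nonneg.mpr (by linarith : A2 - A1 ≤ v)),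
          mul_nonneg hg1 (by linarith : (0:ℝ) ≤ v), mul_nonneg (sub_nonneg.mpr hg1v) hvpos.le]
  have heq : (A2 + g2 - (A1 + g1)) / v' - (A2 - A1) / v
      = ((A2 + g2 - (A1 + g1)) * v - (A2 - A1) * v') / (v * v') := by
    field_simp
  rw [heq, abs_div, abs_of_pos (mul_pos hvpos hv'pos)]
  rw [div_le_iff₀ (mul_pos hvpos hv'pos)]
  linarith

lemma pick_iff {p a b x y : ℝ} (hp : 0 < p) :
    (a + p * x > b + p * y) ↔ x > (b - a) / p + y := by
  constructor
  · intro h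
    have h' : (b - a) / p < x - y := by rw [div_lt_iff₀ hp]; nlinarith
    linarith
  · intro h
    have h' : b - a < (x - y) * p := by rw [← div_lt_iff₀ hp]; linarith
    nlinarith

lemma pickc_iff {p a b x y : ℝ} (hp : 0 < p) :
    (a + p * x ≤ b + p * y) ↔ y ≥ x - (b - a) / p := by
  have hx : x - (b - a) / p = (x * p - (b - a)) / p := by field_simp
  rw [ge_iff_le, hx, div_le_iff₀ hp]
  constructor <;> intro h <;> nlinarith

lemma cum_ge_one {s : ℕ → ℝ} (h0 : s 0 = 1) (hp : ∀ t, 1 ≤ t → 0 ≤ s t) (u : ℕ) :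
    1 ≤ cum s u := by
  unfold cum
  rw [Finset.sum_range_succ']
  have : 0 ≤ ∑ i ∈ Finset.range u, s (i + 1) :=
    Finset.sum_nonneg fun i _ => hp (i + 1) (by omega)
  linarith

lemma cum_succ {s : ℕ → ℝ} {t : ℕ} (ht : 1 ≤ t) : cum s t = cum s (t - 1) + s t := by
  unfold cum
  have h : t - 1 + 1 = t := by omega
  rw [h, Finset.sum_range_succ]

/-- Per-step comparison of FPL and IFPL: the choice probabilities of the two algorithms
differ by a factor of at most `e^{2/μ}`, hence `l_t ≥ e^{−2/μ} r_t`. -/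
theorem fpl_ifpl_step_comparison
    {Ω : Type*} [MeasurableSpace Ω] (Pr : Measure Ω) [IsProbabilityMeasure Pr]
    (ξ : ℕ × Bool → Ω → ℝ) (hmeas : ∀ p, Measurable (ξ p))
    (hindep : iIndepFun ξ Pr)
    (htail : ∀ p, ∀ y : ℝ, 0 ≤ y → Pr {ω | ξ p ω > y} = ENNReal.ofReal (Real.exp (-y)))
    (μ : ℝ) (hμ0 : 0 < μ) (hμ1 : μ < 1)
    (s1 s2 : ℕ → ℝ) (h01 : s1 0 = 1) (h02 : s2 0 = 1)
    (hpos : ∀ t, 1 ≤ t → 0 ≤ s1 t ∧ 0 ≤ s2 t)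
    (hone : ∀ t, 1 ≤ t → s1 t = 0 ∨ s2 t = 0)
    : ∀ t : ℕ, 1 ≤ t →
      (ENNReal.ofReal (Real.exp (2 / μ)) * Pr (pick1 ξ μ s1 s2 t t) ≥
          Pr (pick1 ξ μ s1 s2 t (t - 1)) ∧
        Pr (pick1 ξ μ s1 s2 t (t - 1)) ≥
          ENNReal.ofReal (Real.exp (-(2 / μ))) * Pr (pick1 ξ μ s1 s2 t t)) ∧
      (ENNReal.ofReal (Real.exp (2 / μ)) * Pr (pick1 ξ μ s1 s2 t t)ᶜ ≥
          Pr (pick1 ξ μ s1 s2 t (t - 1))ᶜ ∧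
        Pr (pick1 ξ μ s1 s2 t (t - 1))ᶜ ≥
          ENNReal.ofReal (Real.exp (-(2 / μ))) * Pr (pick1 ξ μ s1 s2 t t)ᶜ) ∧
      fplGain Pr ξ μ s1 s2 t ≥ Real.exp (-(2 / μ)) * ifplGain Pr ξ μ s1 s2 t := by
  intro t ht
  set X : Ω → ℝ := ξ (t, true) with hXdef
  set Y : Ω → ℝ := ξ (t, false) with hYdef
  have hX : Measurable X := hmeas _
  have hY : Measurable Y := hmeas _
  have hind : IndepFun X Y Pr :=
    hindep.indepFun (show ((t, true) : ℕ × Bool) ≠ (t, false) by simp)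
  have hIoiX := tail_Ioi Pr hX (htail (t, true))
  have hIciY := tail_Ici Pr hY (htail (t, false))
  -- cumulative gains
  have hA1 : 1 ≤ cum s1 (t - 1) := cum_ge_one h01 (fun u hu => (hpos u hu).1) _
  have hA2 : 1 ≤ cum s2 (t - 1) := cum_ge_one h02 (fun u hu => (hpos u hu).2) _
  have hg1 : 0 ≤ s1 t := (hpos t ht).1
  have hg2 : 0 ≤ s2 t := (hpos t ht).2
  have hc1 : cum s1 t = cum s1 (t - 1) + s1 t := cum_succ ht
  have hc2 : cum s2 t = cum s2 (t - 1) + s2 t := cum_succ ht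
  -- positivity of learning-rate scalings
  have hvpos : ∀ u, (0:ℝ) < vmax s1 s2 u := by
    intro u
    have : 1 ≤ cum s1 u := cum_ge_one h01 (fun w hw => (hpos w hw).1) _
    have h' : cum s1 u ≤ vmax s1 s2 u := le_max_left _ _
    linarith
  have hppos : ∀ u, (0:ℝ) < μ * vmax s1 s2 u := fun u => mul_pos hμ0 (hvpos u)
  -- the constant `c u`
  set c : ℕ → ℝ := fun u => (cum s2 u - cum s1 u) / (μ * vmax s1 s2 u) with hcdef
  -- rewriting the events
  have hev : ∀ u, pick1 ξ μ s1 s2 t u = {ω | X ω > c u + Y ω} := by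
    intro u
    ext ω
    exact pick_iff (hppos u)
  have hevc : ∀ u, (pick1 ξ μ s1 s2 t u)ᶜ = {ω | Y ω ≥ X ω - c u} := by
    intro u
    ext ω
    simp only [pick1, Set.mem_compl_iff, Set.mem_setOf_eq, not_lt]
    exact pickc_iff (hppos u)
  -- probabilities as integrals
  have hP : ∀ u, Pr (pick1 ξ μ s1 s2 t u) = ∫⁻ y, tailf (c u + y) ∂(Pr.map Y) := by
    intro u; rw [hev u]; exact prob_gt Pr hX hY hind hIoiX (c u)
  have hQ : ∀ u, Pr (pick1 ξ μ s1 s2 t u)ᶜ = ∫⁻ x, tailf (x - c u) ∂(Pr.map X) := by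
    intro u; rw [hevc u]; exact prob_ge Pr hX hY hind hIciY (c u)
  -- the crucial bound on |c t - c (t-1)|
  have hδpos : (0:ℝ) ≤ 2 / μ := by positivity
  have hbound : |c t - c (t - 1)| ≤ 2 / μ := by
    have hmain := diff_bound hA1 hA2 hg1 hg2 (hone t ht)
    have hrw : c t - c (t - 1)
        = ((cum s2 (t-1) + s2 t - (cum s1 (t-1) + s1 t)) / max (cum s1 (t-1) + s1 t)
          (cum s2 (t-1) + s2 t) - (cum s2 (t-1) - cum s1 (t-1)) / max (cum s1 (t-1))
          (cum s2 (t-1))) / μ := by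
      simp only [hcdef]
      unfold vmax
      rw [hc1, hc2]
      field_simp
    rw [hrw, abs_div, abs_of_pos hμ0]
    rw [div_le_div_iff_of_pos_right hμ0]  -- may need name fix
    exact hmain
  have hb1 : c t ≤ c (t - 1) + 2 / μ := by
    have := abs_le.mp hbound; linarith [this.2]
  have hb2 : c (t - 1) ≤ c t + 2 / μ := by
    have := abs_le.mp hbound; linarith [this.1]
  -- the four ENNReal inequalities
  have hP1 : ENNReal.ofReal (Real.exp (-(2/μ))) * Pr (pick1 ξ μ s1 s2 t t)
      ≤ Pr (pick1 ξ μ s1 s2 t (t - 1)) := by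
    rw [hP t, hP (t-1)]
    exact lint_comp _ hδpos (fun y => by linarith)
  have hP2 : ENNReal.ofReal (Real.exp (-(2/μ))) * Pr (pick1 ξ μ s1 s2 t (t - 1))
      ≤ Pr (pick1 ξ μ s1 s2 t t) := by
    rw [hP t, hP (t-1)]
    exact lint_comp _ hδpos (fun y => by linarith)
  have hQ1 : ENNReal.ofReal (Real.exp (-(2/μ))) * Pr (pick1 ξ μ s1 s2 t t)ᶜ
      ≤ Pr (pick1 ξ μ s1 s2 t (t - 1))ᶜ := by
    rw [hQ t, hQ (t-1)]
    exact lint_comp _ hδpos (fun x => by linarith)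
  have hQ2 : ENNReal.ofReal (Real.exp (-(2/μ))) * Pr (pick1 ξ μ s1 s2 t (t - 1))ᶜ
      ≤ Pr (pick1 ξ μ s1 s2 t t)ᶜ := by
    rw [hQ t, hQ (t-1)]
    exact lint_comp _ hδpos (fun x => by linarith)
  refine ⟨⟨ennreal_flip hP2, hP1⟩, ⟨ennreal_flip hQ2, hQ1⟩, ?_⟩
  -- the gain inequality
  have toReal_step : ∀ a b : ENNReal, b ≠ ⊤ → ENNReal.ofReal (Real.exp (-(2/μ))) * a ≤ b →
      Real.exp (-(2/μ)) * a.toReal ≤ b.toReal := by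
    intro a b hb h
    have := ENNReal.toReal_mono hb h
    rwa [ENNReal.toReal_mul, ENNReal.toReal_ofReal (Real.exp_pos _).le] at this
  have hp := toReal_step _ _ (measure_ne_top _ _) hP1
  have hq := toReal_step _ _ (measure_ne_top _ _) hQ1
  unfold fplGain ifplGain
  have e1 : s1 t * (Real.exp (-(2/μ)) * (Pr (pick1 ξ μ s1 s2 t t)).toReal)
      ≤ s1 t * (Pr (pick1 ξ μ s1 s2 t (t-1))).toReal := mul_le_mul_of_nonneg_left hp hg1
  have e2 : s2 t * (Real.exp (-(2/μ)) * (Pr (pick1 ξ μ s1 s2 t t)ᶜ).toReal)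
      ≤ s2 t * (Pr (pick1 ξ μ s1 s2 t (t-1))ᶜ).toReal := mul_le_mul_of_nonneg_left hq hg2
  have : Real.exp (-(2/μ)) * (s1 t * (Pr (pick1 ξ μ s1 s2 t t)).toReal
      + s2 t * (Pr (pick1 ξ μ s1 s2 t t)ᶜ).toReal)
      = s1 t * (Real.exp (-(2/μ)) * (Pr (pick1 ξ μ s1 s2 t t)).toReal)
      + s2 t * (Real.exp (-(2/μ)) * (Pr (pick1 ξ μ s1 s2 t t)ᶜ).toReal) := by ring
  rw [ge_iff_le, this]
  exact add_le_add e1 e2
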